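/- If two distinct assignments x and y satisfy B^x = B^y, then the averaged assignment z = (1/2)(x + y) R-dominates x or R-dominates y. -/
import Mathlib


open Finset

/-- An n×n matrix with nonnegative real entries whose rows and columns each sum to 1. -/
def Bistochastic {n : ℕ} (x : Fin n → Fin n → ℝ) : Prop :=
  (∀ i o, 0 ≤ x i o) ∧ (∀ i, ∑ o, x i o = 1) ∧ (∀ o, ∑ i, x i o = 1)

/-- `tailProb rank x i k` = probability that agent `i` receives an object ranked `k`-th
or worse (ranks are 0-indexed: rank 0 = most preferred). -/
def tailProb {n : ℕ} (rank : Fin n → Fin n → Fin n) (x : Fin n → Fin n → ℝ)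
    (i k : Fin n) : ℝ :=
  ∑ o ∈ Finset.univ.filter (fun o => k ≤ rank i o), x i o

/-- The values of `v` rearranged in non-increasing order. -/
noncomputable def sortedDesc {n : ℕ} (v : Fin n → ℝ) : Fin n → ℝ :=
  fun j => v (Tuple.sort (fun i => -v i) j)

/-- Block `t` of `Bvec rank x` is the non-increasing rearrangement of the tail
probabilities at threshold `n-1-t`; so blocks run from the worst rank down. -/
noncomputable def Bvec {n : ℕ} (rank : Fin n → Fin n → Fin n) (x : Fin n → Fin n → ℝ) :
    Fin n → Fin n → ℝ :=
  fun t => sortedDesc (fun i => tailProb rank x i t.rev)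

/-- Lexicographic strict order on doubly-indexed vectors (outer index first). -/
def BlockLexLt {α β : Type*} [LinearOrder α] [LinearOrder β] (u v : α → β → ℝ) : Prop :=
  ∃ t s, u t s < v t s ∧ ∀ t' s', (t' < t ∨ (t' = t ∧ s' < s)) → u t' s' = v t' s'

/-- `x` Rawlsian-dominates `y`. -/
def RDom {n : ℕ} (rank : Fin n → Fin n → Fin n) (x y : Fin n → Fin n → ℝ) : Prop :=
  BlockLexLt (Bvec rank x) (Bvec rank y)

/-- A Rawlsian assignment: a bistochastic matrix not R-dominated by any other. -/
def Rawlsian {n : ℕ} (rank : Fin n → Fin n → Fin n) (x : Fin n → Fin n → ℝ) : Prop :=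
  Bistochastic x ∧ ∀ y, Bistochastic y → ¬ RDom rank y x

/-! ### Auxiliary lemmas -/

lemma sortedDesc_antitone {n : ℕ} (v : Fin n → ℝ) : Antitone (sortedDesc v) := by
  intro a b hab
  have h := Tuple.monotone_sort (fun i => -v i) hab
  simp only [Function.comp_apply] at h
  simp only [sortedDesc]
  linarith

lemma sum_comp_sorted {n : ℕ} (v : Fin n → ℝ) (g : ℝ → ℝ) :
    ∑ j, g (sortedDesc v j) = ∑ i, g (v i) := by
  simpa [sortedDesc, Function.comp] using
    Equiv.sum_comp (Tuple.sort (fun i => -v i)) (fun i => g (v i))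

lemma antitone_sum_le {n m : ℕ} (w : Fin n → ℝ) (hw : Antitone w)
    (T : Finset (Fin n)) (hT : T.card = m) :
    ∑ j ∈ T, w j ≤ ∑ j ∈ univ.filter (fun j : Fin n => (j : ℕ) < m), w j := by
  classical
  set I : Finset (Fin n) := univ.filter (fun j : Fin n => (j : ℕ) < m) with hI
  have hmn : m ≤ n := hT ▸ (le_trans (card_le_card (subset_univ T)) (by simp))
  have hIcard : I.card = m := by
    have : I = (univ : Finset (Fin m)).map (Fin.castLEEmb hmn) := by
      ext j
      simp [hI, Fin.castLEEmb, Fin.castLE]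
      constructor
      · intro hj; exact ⟨⟨j, hj⟩, rfl⟩
      · rintro ⟨i, rfl⟩; exact i.isLt
    rw [this]; simp
  set A : Finset (Fin n) := T.filter (fun j => (j : ℕ) < m) with hA
  set B : Finset (Fin n) := T.filter (fun j => ¬ (j : ℕ) < m) with hB
  have hTsplit : ∑ j ∈ A, w j + ∑ j ∈ B, w j = ∑ j ∈ T, w j :=
    sum_filter_add_sum_filter_not T _ w
  have hAI : A ⊆ I := by intro j hj; simp [hA, hI] at hj ⊢; exact hj.2
  have hIsplit : ∑ j ∈ I \ A, w j + ∑ j ∈ A, w j = ∑ j ∈ I, w j :=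
    Finset.sum_sdiff hAI
  have hcard : B.card = (I \ A).card := by
    have h1 : A.card + B.card = m := by
      rw [hA, hB]
      rw [Finset.card_filter_add_card_filter_not]
      exact hT
    have h2 : (I \ A).card = I.card - A.card := card_sdiff_of_subset hAI
    omega
  have e : (B : Type) ≃ (I \ A : Finset (Fin n)) := Finset.equivOfCardEq hcard
  have key : ∑ j ∈ B, w j ≤ ∑ j ∈ I \ A, w j := by
    rw [← Finset.sum_coe_sort B, ← Finset.sum_coe_sort (I \ A)]
    rw [← Equiv.sum_comp e (fun j : (I \ A : Finset (Fin n)) => w j)]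
    apply Finset.sum_le_sum
    intro j _
    apply hw
    have hj : ¬ ((j : Fin n) : ℕ) < m := (Finset.mem_filter.mp j.2).2
    have hej : ((e j : Fin n) : ℕ) < m := by
      have h2 := (Finset.mem_sdiff.mp (e j).2).1
      exact (Finset.mem_filter.mp h2).2
    exact Fin.le_def.mpr (by omega)
  linarith

noncomputable def topSum {n : ℕ} (m : ℕ) (v : Fin n → ℝ) : ℝ :=
  ∑ j ∈ univ.filter (fun j : Fin n => (j : ℕ) < m), sortedDesc v j

lemma sum_le_topSum {n m : ℕ} (v : Fin n → ℝ) (T : Finset (Fin n)) (hT : T.card = m) :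
    ∑ j ∈ T, v j ≤ topSum m v := by
  have hc : (T.image (Tuple.sort (fun i => -v i)).symm).card = m := by
    rw [Finset.card_image_of_injective _ (Equiv.injective _)]; exact hT
  have h := antitone_sum_le (sortedDesc v) (sortedDesc_antitone v)
    (T.image (Tuple.sort (fun i => -v i)).symm) hc
  have heq : ∑ j ∈ T.image (Tuple.sort (fun i => -v i)).symm, sortedDesc v j
      = ∑ j ∈ T, v j := by
    rw [Finset.sum_image (fun a _ b _ h => Equiv.injective _ h)]
    simp [sortedDesc]
  rw [← heq]; exact h

lemma topSum_exists {n : ℕ} (m : ℕ) (hm : m ≤ n) (v : Fin n → ℝ) :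
    ∃ S : Finset (Fin n), S.card = m ∧ topSum m v = ∑ i ∈ S, v i := by
  classical
  refine ⟨(univ.filter (fun j : Fin n => (j : ℕ) < m)).image (Tuple.sort (fun i => -v i)), ?_, ?_⟩
  · rw [Finset.card_image_of_injective _ (Equiv.injective _)]
    have : (univ.filter (fun j : Fin n => (j : ℕ) < m))
        = (univ : Finset (Fin m)).map (Fin.castLEEmb hm) := by
      ext j
      simp [Fin.castLEEmb, Fin.castLE]
      constructor
      · intro hj; exact ⟨⟨j, hj⟩, rfl⟩
      · rintro ⟨i, rfl⟩; exact i.isLt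
    rw [this]; simp
  · rw [Finset.sum_image (fun a _ b _ h => Equiv.injective _ h)]
    rfl

lemma topSum_avg_le {n : ℕ} (m : ℕ) (hm : m ≤ n) (p q : Fin n → ℝ) :
    topSum m (fun i => (p i + q i) / 2) ≤ (topSum m p + topSum m q) / 2 := by
  obtain ⟨S, hS, hSe⟩ := topSum_exists m hm (fun i => (p i + q i) / 2)
  rw [hSe]
  have h1 := sum_le_topSum p S hS
  have h2 := sum_le_topSum q S hS
  have : ∑ i ∈ S, (p i + q i) / 2 = (∑ i ∈ S, p i + ∑ i ∈ S, q i) / 2 := by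
    rw [← Finset.sum_add_distrib, Finset.sum_div]
  rw [this]; linarith

lemma topSum_succ {n : ℕ} (s : Fin n) (v : Fin n → ℝ) :
    topSum ((s : ℕ) + 1) v = topSum (s : ℕ) v + sortedDesc v s := by
  unfold topSum
  have h : (univ.filter (fun j : Fin n => (j : ℕ) < (s : ℕ) + 1))
      = insert s (univ.filter (fun j : Fin n => (j : ℕ) < (s : ℕ))) := by
    ext j
    simp [Fin.ext_iff]
    omega
  rw [h, Finset.sum_insert (by simp)]
  ring

lemma eq_of_sorted_avg {n : ℕ} (u v : Fin n → ℝ)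
    (h1 : sortedDesc u = sortedDesc v)
    (h2 : sortedDesc (fun i => (u i + v i) / 2) = sortedDesc u) : u = v := by
  have e1 : ∑ i, (u i) ^ 2 = ∑ i, (v i) ^ 2 := by
    rw [← sum_comp_sorted u (· ^ 2), ← sum_comp_sorted v (· ^ 2), h1]
  have e2 : ∑ i, ((u i + v i) / 2) ^ 2 = ∑ i, (u i) ^ 2 := by
    rw [← sum_comp_sorted (fun i => (u i + v i) / 2) (· ^ 2),
        ← sum_comp_sorted u (· ^ 2), h2]
  have e3 : ∑ i, ((u i - v i) / 2) ^ 2 = 0 := by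
    have key : ∀ i : Fin n, ((u i - v i) / 2) ^ 2
        = ((u i) ^ 2 + (v i) ^ 2) / 2 - ((u i + v i) / 2) ^ 2 := fun i => by ring
    rw [Finset.sum_congr rfl (fun i _ => key i), Finset.sum_sub_distrib]
    have : ∑ i, ((u i) ^ 2 + (v i) ^ 2) / 2 = (∑ i, (u i) ^ 2 + ∑ i, (v i) ^ 2) / 2 := by
      rw [← Finset.sum_add_distrib, Finset.sum_div]
    rw [this, e2]; linarith
  funext i
  have h0 := (Finset.sum_eq_zero_iff_of_nonneg
    (fun i _ => sq_nonneg ((u i - v i) / 2))).mp e3 i (mem_univ i)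
  have := pow_eq_zero_iff (n := 2) (by norm_num) |>.mp h0
  have : u i - v i = 0 := by
    field_simp at this
    linarith [this]
  linarith

lemma tail_eq_imp_eq {n : ℕ} (rank : Fin n → Fin n → Fin n)
    (hrank : ∀ i, Function.Bijective (rank i)) (x y : Fin n → Fin n → ℝ)
    (h : ∀ i k, tailProb rank x i k = tailProb rank y i k) : x = y := by
  funext i o
  classical
  set F : (Fin n → Fin n → ℝ) → ℕ → ℝ :=
    fun w k => ∑ o' ∈ univ.filter (fun o' => k ≤ ((rank i o' : Fin n) : ℕ)), w i o' with hF
  have hFeq : ∀ k, F x k = F y k := by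
    intro k
    by_cases hk : k < n
    · have hh := h i ⟨k, hk⟩
      unfold tailProb at hh
      have hfil : ∀ o' : Fin n, ((⟨k, hk⟩ : Fin n) ≤ rank i o') ↔ (k ≤ ((rank i o' : Fin n) : ℕ)) := by
        intro o'; rw [Fin.le_def]
      simp only [hF]
      rw [show (univ.filter (fun o' => k ≤ ((rank i o' : Fin n) : ℕ)))
          = (univ.filter (fun o' => (⟨k, hk⟩ : Fin n) ≤ rank i o')) from by
        ext o'; simp [hfil]]
      exact hh
    · have hempty : (univ.filter (fun o' => k ≤ ((rank i o' : Fin n) : ℕ))) = ∅ := by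
        ext o'; simp
        have := (rank i o').isLt; omega
      simp [hF, hempty]
  have step : ∀ (w : Fin n → Fin n → ℝ) (k : ℕ),
      (∑ o' ∈ univ.filter (fun o' => ((rank i o' : Fin n) : ℕ) = k), w i o') = F w k - F w (k + 1) := by
    intro w k
    have hsplit := Finset.sum_filter_add_sum_filter_not
      (univ.filter (fun o' => k ≤ ((rank i o' : Fin n) : ℕ)))
      (fun o' => ((rank i o' : Fin n) : ℕ) = k) (fun o' => w i o')
    rw [Finset.filter_filter, Finset.filter_filter] at hsplit
    have h1 : (univ.filter fun o' => k ≤ ((rank i o' : Fin n) : ℕ) ∧ ((rank i o' : Fin n) : ℕ) = k)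
        = univ.filter (fun o' => ((rank i o' : Fin n) : ℕ) = k) := by
      ext o'; simp; omega
    have h2 : (univ.filter fun o' => k ≤ ((rank i o' : Fin n) : ℕ) ∧ ¬ ((rank i o' : Fin n) : ℕ) = k)
        = univ.filter (fun o' => k + 1 ≤ ((rank i o' : Fin n) : ℕ)) := by
      ext o'; simp; omega
    rw [h1, h2] at hsplit
    simp only [hF]
    linarith [hsplit]
  have hsingle : (univ.filter (fun o' => ((rank i o' : Fin n) : ℕ) = ((rank i o : Fin n) : ℕ))) = {o} := by
    ext o'
    simp only [mem_filter, mem_univ, true_and, mem_singleton]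
    constructor
    · intro hv
      exact (hrank i).injective (Fin.val_injective hv)
    · intro hv; rw [hv]
  have hx' := step x ((rank i o : Fin n) : ℕ)
  have hy' := step y ((rank i o : Fin n) : ℕ)
  rw [hsingle, Finset.sum_singleton] at hx' hy'
  rw [hx', hy', hFeq, hFeq]

lemma blockLexLt_of {n : ℕ} (u v : Fin n → Fin n → ℝ) (hne : u ≠ v)
    (H : ∀ t s, (∀ t' s', (t' < t ∨ (t' = t ∧ s' < s)) → u t' s' = v t' s') → u t s ≤ v t s) :
    BlockLexLt u v := by
  classical
  have hDt : (univ.filter (fun t : Fin n => ∃ s, u t s ≠ v t s)).Nonempty := by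
    by_contra hcon
    apply hne
    funext t s
    rw [Finset.not_nonempty_iff_eq_empty] at hcon
    by_contra hne2
    have : t ∈ univ.filter (fun t : Fin n => ∃ s, u t s ≠ v t s) := by
      simp; exact ⟨s, hne2⟩
    rw [hcon] at this; exact absurd this (Finset.notMem_empty t)
  set t₀ := (univ.filter (fun t : Fin n => ∃ s, u t s ≠ v t s)).min' hDt with ht₀
  have ht₀mem := (univ.filter (fun t : Fin n => ∃ s, u t s ≠ v t s)).min'_mem hDt
  rw [Finset.mem_filter] at ht₀mem
  obtain ⟨-, s₁, hs₁⟩ := ht₀mem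
  have hDs : (univ.filter (fun s : Fin n => u t₀ s ≠ v t₀ s)).Nonempty :=
    ⟨s₁, by simpa using hs₁⟩
  set s₀ := (univ.filter (fun s : Fin n => u t₀ s ≠ v t₀ s)).min' hDs with hs₀
  have hs₀mem := (univ.filter (fun s : Fin n => u t₀ s ≠ v t₀ s)).min'_mem hDs
  rw [Finset.mem_filter] at hs₀mem
  have hprefix : ∀ t' s', (t' < t₀ ∨ (t' = t₀ ∧ s' < s₀)) → u t' s' = v t' s' := by
    rintro t' s' (hlt | ⟨rfl, hlt⟩)
    · by_contra hne2
      have : t' ∈ univ.filter (fun t : Fin n => ∃ s, u t s ≠ v t s) := by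
        simp; exact ⟨s', hne2⟩
      have := Finset.min'_le _ _ this
      rw [← ht₀] at this
      exact absurd hlt (not_lt.mpr this)
    · by_contra hne2
      have hmem : s' ∈ univ.filter (fun s : Fin n => u t₀ s ≠ v t₀ s) := by
        simp only [mem_filter, mem_univ, true_and]; exact hne2
      have hle := Finset.min'_le _ _ hmem
      exact absurd hlt (not_lt.mpr hle)
  exact ⟨t₀, s₀, lt_of_le_of_ne (H t₀ s₀ hprefix) hs₀mem.2, hprefix⟩

/-- If two distinct assignments have the same vector `B`, then their average
R-dominates one of them. -/
theorem average_rdominates {n : ℕ} (rank : Fin n → Fin n → Fin n)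
    (hrank : ∀ i, Function.Bijective (rank i))
    (x y : Fin n → Fin n → ℝ) (hx : Bistochastic x) (hy : Bistochastic y)
    (hne : x ≠ y) (hB : Bvec rank x = Bvec rank y) :
    RDom rank (fun i o => (x i o + y i o) / 2) x ∨
      RDom rank (fun i o => (x i o + y i o) / 2) y := by
  classical
  left
  unfold RDom
  have hlin : ∀ t : Fin n,
      (fun i => tailProb rank (fun i o => (x i o + y i o) / 2) i t)
        = fun i => (tailProb rank x i t + tailProb rank y i t) / 2 := by
    intro t; funext i
    unfold tailProb
    rw [← Finset.sum_add_distrib, Finset.sum_div]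
  have hxyt : ∀ t : Fin n,
      sortedDesc (fun i => tailProb rank x i t) = sortedDesc (fun i => tailProb rank y i t) := by
    intro t
    have := congrFun hB t.rev
    simpa [Bvec, Fin.rev_rev] using this
  apply blockLexLt_of
  · -- Bvec z ≠ Bvec x
    intro hEq
    apply hne
    apply tail_eq_imp_eq rank hrank
    intro i k
    have h2 : sortedDesc (fun i => (tailProb rank x i k + tailProb rank y i k) / 2)
        = sortedDesc (fun i => tailProb rank x i k) := by
      have hk := congrFun hEq k.rev
      simp only [Bvec, Fin.rev_rev] at hk
      rw [← hlin k]
      exact hk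
    have := eq_of_sorted_avg _ _ (hxyt k) h2
    exact congrFun this i
  · -- pointwise lex inequality
    intro t s hpre
    have hBz : Bvec rank (fun i o => (x i o + y i o) / 2) t
        = sortedDesc (fun i => (tailProb rank x i t.rev + tailProb rank y i t.rev) / 2) := by
      simp only [Bvec]
      rw [hlin t.rev]
    have hBx : Bvec rank x t = sortedDesc (fun i => tailProb rank x i t.rev) := rfl
    set p : Fin n → ℝ := fun i => tailProb rank x i t.rev with hp
    set q : Fin n → ℝ := fun i => tailProb rank y i t.rev with hq
    have h1 : topSum ((s : ℕ) + 1) (fun i => (p i + q i) / 2) ≤ topSum ((s : ℕ) + 1) p := by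
      have havg := topSum_avg_le ((s : ℕ) + 1) s.isLt p q
      have heq : topSum ((s : ℕ) + 1) q = topSum ((s : ℕ) + 1) p := by
        unfold topSum
        rw [show sortedDesc q = sortedDesc p from (hxyt t.rev).symm]
      linarith
    have h2 : topSum (s : ℕ) (fun i => (p i + q i) / 2) = topSum (s : ℕ) p := by
      unfold topSum
      apply Finset.sum_congr rfl
      intro j hj
      simp only [mem_filter] at hj
      have hjs : j < s := Fin.lt_def.mpr hj.2
      have hps := hpre t j (Or.inr ⟨rfl, hjs⟩)
      rw [hBz, hBx] at hps
      exact hps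
    have h3 := topSum_succ s (fun i => (p i + q i) / 2)
    have h4 := topSum_succ s p
    rw [hBz, hBx]
    linarith
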